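/- arXiv:1402.2903 — 3 statements merged into one kernel-verified Lean document; each statement's English description precedes it below -/
import Mathlib

section
/- Let G be a graph, let a be a leaf of G with neighbor b, and suppose G - {a, b} is a König-Egerváry graph with a unique perfect matching M. Then G is a König-Egerváry graph with unique perfect matching M ∪ {ab}. -/
open SimpleGraph

attribute [local instance] Classical.propDecidable

variable {V : Type*}

/-- A set of vertices is independent if no two of its members are adjacent. -/
def IsIndepSet (G : SimpleGraph V) (s : Set V) : Prop :=
  ∀ ⦃a⦄, a ∈ s → ∀ ⦃b⦄, b ∈ s → ¬ G.Adj a b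

/-- The independence number α(G). -/
noncomputable def indepNum (G : SimpleGraph V) [Fintype V] : ℕ :=
  sSup {n | ∃ s : Finset V, _root_.IsIndepSet G ↑s ∧ s.card = n}

/-- The matching number μ(G). -/
noncomputable def matchNum (G : SimpleGraph V) [Fintype V] : ℕ :=
  sSup {n | ∃ M : G.Subgraph, M.IsMatching ∧ M.edgeSet.ncard = n}

/-- A König-Egerváry graph: α(G) + μ(G) = |V(G)|. -/
def KonigEgervary (G : SimpleGraph V) [Fintype V] : Prop :=
  _root_.indepNum G + matchNum G = Fintype.card V

/-- A maximum independent set. -/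
def IsMaxIndepSet (G : SimpleGraph V) [Fintype V] (s : Finset V) : Prop :=
  _root_.IsIndepSet G ↑s ∧ s.card = _root_.indepNum G

/-- A maximum matching. -/
def IsMaximumMatching (G : SimpleGraph V) [Fintype V] (M : G.Subgraph) : Prop :=
  M.IsMatching ∧ M.edgeSet.ncard = matchNum G

/-- A leaf: a vertex with exactly one neighbour. -/
def IsLeaf (G : SimpleGraph V) (v : V) : Prop := ∃! u, G.Adj v u

/-- A cycle `p` is `M`-alternating if of every two distinct incident edges of
the cycle exactly one belongs to `M`. -/
def IsAlternatingCycle (G : SimpleGraph V) (M : Set (Sym2 V)) {v : V} (p : G.Walk v v) : Prop :=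
  p.IsCycle ∧ ∀ e f : Sym2 V, e ∈ p.edges → f ∈ p.edges → e ≠ f →
    (∃ x, x ∈ e ∧ x ∈ f) → (e ∈ M ↔ f ∉ M)

/-- `G` contains an `M`-alternating cycle. -/
def HasAlternatingCycle (G : SimpleGraph V) (M : Set (Sym2 V)) : Prop :=
  ∃ (v : V) (p : G.Walk v v), IsAlternatingCycle G M p

/-- `G` is unicyclic: it has exactly one cycle (up to its edge set). -/
def UniqueCycle (G : SimpleGraph V) : Prop :=
  ∃! c : Set (Sym2 V), ∃ (v : V) (p : G.Walk v v), p.IsCycle ∧ c = {e | e ∈ p.edges}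

/-- The core of `G`: the intersection of all maximum independent sets. -/
def core (G : SimpleGraph V) [Fintype V] : Set V :=
  {v | ∀ s : Finset V, IsMaxIndepSet G s → v ∈ s}

lemma matching_verts_ncard {G : SimpleGraph V} [Fintype V] {M : G.Subgraph}
    (hm : M.IsMatching) : M.verts.ncard = 2 * M.edgeSet.ncard := by
  classical
  have hfin : M.edgeSet.Finite := Set.toFinite _
  have hvfin : M.verts.Finite := Set.toFinite _
  set E : Finset (Sym2 V) := hfin.toFinset with hE
  set f : Sym2 V → Finset V := fun e => Finset.univ.filter (· ∈ e) with hf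
  have hmem : ∀ e ∈ E, ∀ v ∈ f e, v ∈ M.verts := by
    intro e he v hv
    simp only [hf, Finset.mem_filter] at hv
    rw [hE, Set.Finite.mem_toFinset] at he
    induction e with
    | _ x y =>
      rw [Subgraph.mem_edgeSet] at he
      rcases Sym2.mem_iff.mp hv.2 with rfl | rfl
      · exact he.fst_mem
      · exact he.symm.fst_mem
  have hbU : hvfin.toFinset = E.biUnion f := by
    ext v
    simp only [Set.Finite.mem_toFinset, Finset.mem_biUnion]
    constructor
    · intro hv
      obtain ⟨w, hw, -⟩ := hm hv
      exact ⟨s(v, w), by simpa [hE] using hw, by simp [hf]⟩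
    · rintro ⟨e, he, hv⟩
      exact hmem e he v hv
  have hdisj : ∀ e₁ ∈ E, ∀ e₂ ∈ E, e₁ ≠ e₂ → Disjoint (f e₁) (f e₂) := by
    intro e₁ he₁ e₂ he₂ hne
    rw [Finset.disjoint_left]
    intro v hv1 hv2
    simp only [hf, Finset.mem_filter] at hv1 hv2
    rw [hE, Set.Finite.mem_toFinset] at he₁ he₂
    obtain ⟨w₁, rfl⟩ := Sym2.mem_iff_exists.mp hv1.2
    obtain ⟨w₂, rfl⟩ := Sym2.mem_iff_exists.mp hv2.2
    rw [Subgraph.mem_edgeSet] at he₁ he₂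
    obtain ⟨w, -, hw⟩ := hm (M.edge_vert he₁)
    exact hne (by rw [hw w₁ he₁, hw w₂ he₂])
  have hcard2 : ∀ e ∈ E, (f e).card = 2 := by
    intro e he
    rw [hE, Set.Finite.mem_toFinset] at he
    induction e with
    | _ x y =>
      rw [Subgraph.mem_edgeSet] at he
      have hxy : x ≠ y := (M.adj_sub he).ne
      have : f s(x, y) = {x, y} := by
        ext v
        simp [hf, Sym2.mem_iff]
      rw [this, Finset.card_insert_of_notMem (by simp [hxy]), Finset.card_singleton]
  calc M.verts.ncard = hvfin.toFinset.card := Set.ncard_eq_toFinset_card _ hvfin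
    _ = (E.biUnion f).card := by rw [hbU]
    _ = ∑ e ∈ E, (f e).card := Finset.card_biUnion hdisj
    _ = ∑ e ∈ E, 2 := Finset.sum_congr rfl hcard2
    _ = 2 * E.card := by rw [Finset.sum_const, smul_eq_mul, mul_comm]
    _ = 2 * M.edgeSet.ncard := by rw [Set.ncard_eq_toFinset_card _ hfin]
lemma indep_add_matching_le (G : SimpleGraph V) [Fintype V] (s : Finset V)
    (hs : _root_.IsIndepSet G ↑s) (M : G.Subgraph) (hm : M.IsMatching) :
    s.card + M.edgeSet.ncard ≤ Fintype.card V := by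
  classical
  cases isEmpty_or_nonempty V with
  | inl h =>
    have : s = ∅ := Finset.eq_empty_of_isEmpty s
    have h2 : M.edgeSet = ∅ := Set.eq_empty_of_isEmpty _
    simp [this, h2]
  | inr h =>
    have hfin : M.edgeSet.Finite := Set.toFinite _
    set E : Finset (Sym2 V) := hfin.toFinset with hE
    have hex : ∀ e ∈ E, ∃ v, v ∈ e ∧ v ∉ s := by
      intro e he
      rw [hE, Set.Finite.mem_toFinset] at he
      induction e with
      | _ x y =>
        rw [Subgraph.mem_edgeSet] at he
        by_contra hc
        push_neg at hc
        have hx := hc x (by simp)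
        have hy := hc y (by simp)
        exact hs (by exact_mod_cast hx) (by exact_mod_cast hy) (M.adj_sub he)
    set g : Sym2 V → V := fun e =>
      if h : ∃ v, v ∈ e ∧ v ∉ s then h.choose else Classical.arbitrary V with hg
    have hgmem : ∀ e ∈ E, g e ∈ e ∧ g e ∉ s := by
      intro e he
      have h := hex e he
      simp only [hg, dif_pos h]
      exact h.choose_spec
    have hcard : E.card ≤ sᶜ.card := by
      apply Finset.card_le_card_of_injOn g
      · intro e he
        simpa using (hgmem e he).2
      · intro e₁ he₁ e₂ he₂ heq
        have h1 := (hgmem e₁ he₁).1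
        have h2 := (hgmem e₂ he₂).1
        rw [heq] at h1
        simp only [hE, Finset.mem_coe, Set.Finite.mem_toFinset] at he₁ he₂
        obtain ⟨w₁, h1'⟩ := Sym2.mem_iff_exists.mp h1
        obtain ⟨w₂, h2'⟩ := Sym2.mem_iff_exists.mp h2
        rw [h1'] at he₁; rw [h2'] at he₂
        rw [Subgraph.mem_edgeSet] at he₁ he₂
        obtain ⟨w, -, hw⟩ := hm (M.edge_vert he₁)
        have : w₁ = w₂ := (hw w₁ he₁).trans (hw w₂ he₂).symm
        subst this
        exact h1'.trans h2'.symm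
    have h1 : M.edgeSet.ncard = E.card := Set.ncard_eq_toFinset_card _ hfin
    have h3 : sᶜ.card = Fintype.card V - s.card := Finset.card_compl s
    have h4 : s.card ≤ Fintype.card V := Finset.card_le_univ s
    omega

lemma indepNum_spec (G : SimpleGraph V) [Fintype V] :
    ∃ s : Finset V, _root_.IsIndepSet G ↑s ∧ s.card = _root_.indepNum G := by
  have h := Nat.sSup_mem (s := {n | ∃ s : Finset V, _root_.IsIndepSet G ↑s ∧ s.card = n})
    ⟨0, by exact ⟨∅, by simp [_root_.IsIndepSet], by simp⟩⟩
    ⟨Fintype.card V, by rintro n ⟨s, -, rfl⟩; exact Finset.card_le_univ s⟩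
  exact h

lemma le_indepNum (G : SimpleGraph V) [Fintype V] (s : Finset V) (hs : _root_.IsIndepSet G ↑s) :
    s.card ≤ _root_.indepNum G :=
  le_csSup ⟨Fintype.card V, by rintro n ⟨t, -, rfl⟩; exact Finset.card_le_univ t⟩ ⟨s, hs, rfl⟩

lemma matchNum_spec (G : SimpleGraph V) [Fintype V] :
    ∃ M : G.Subgraph, M.IsMatching ∧ M.edgeSet.ncard = matchNum G := by
  have hbdd : ∀ n ∈ {n | ∃ M : G.Subgraph, M.IsMatching ∧ M.edgeSet.ncard = n},
      n ≤ Fintype.card (Sym2 V) := by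
    rintro n ⟨M, -, rfl⟩
    have : M.edgeSet.ncard ≤ (Set.univ : Set (Sym2 V)).ncard :=
      Set.ncard_le_ncard (Set.subset_univ _) (Set.finite_univ)
    simpa [Set.ncard_univ, Nat.card_eq_fintype_card] using this
  exact Nat.sSup_mem ⟨0, by exact ⟨⊥, by simp [Subgraph.IsMatching], by simp⟩⟩ ⟨_, hbdd⟩

lemma le_matchNum (G : SimpleGraph V) [Fintype V] (M : G.Subgraph) (hm : M.IsMatching) :
    M.edgeSet.ncard ≤ matchNum G := by
  have hbdd : ∀ n ∈ {n | ∃ M : G.Subgraph, M.IsMatching ∧ M.edgeSet.ncard = n},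
      n ≤ Fintype.card (Sym2 V) := by
    rintro n ⟨M', -, rfl⟩
    have : M'.edgeSet.ncard ≤ (Set.univ : Set (Sym2 V)).ncard :=
      Set.ncard_le_ncard (Set.subset_univ _) (Set.finite_univ)
    simpa [Set.ncard_univ, Nat.card_eq_fintype_card] using this
  exact le_csSup ⟨_, hbdd⟩ ⟨M, hm, rfl⟩

theorem stmt8 (G : SimpleGraph V) [Fintype V] (a b : V)
    (hleaf : ∀ u, G.Adj a u ↔ u = b)
    (hKE : KonigEgervary (G.induce ({a, b}ᶜ : Set V)))
    (M : (G.induce ({a, b}ᶜ : Set V)).Subgraph) (hM : M.IsPerfectMatching)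
    (huniq : ∀ M' : (G.induce ({a, b}ᶜ : Set V)).Subgraph, M'.IsPerfectMatching → M' = M) :
    KonigEgervary G ∧
    ∃ N : G.Subgraph, N.IsPerfectMatching ∧ N.Adj a b ∧
      (∀ x y : ({a, b}ᶜ : Set V), N.Adj ↑x ↑y ↔ M.Adj x y) ∧
      ∀ N' : G.Subgraph, N'.IsPerfectMatching → N' = N := by
  have hKE : _root_.indepNum (G.induce ({a, b}ᶜ : Set V)) + matchNum (G.induce ({a, b}ᶜ : Set V)) = Fintype.card ({a, b}ᶜ : Set V) := hKE
  show (_root_.indepNum G + matchNum G = Fintype.card V) ∧ _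
  classical
  have hab : G.Adj a b := (hleaf b).mpr rfl
  have hne : a ≠ b := hab.ne
  have hmemS : ∀ v : V, v ∈ ({a, b}ᶜ : Set V) ↔ v ≠ a ∧ v ≠ b := by
    intro v; simp [not_or]
  have haS : a ∉ ({a, b}ᶜ : Set V) := by simp
  have hbS : b ∉ ({a, b}ᶜ : Set V) := by simp
  -- the matching N
  let N : G.Subgraph :=
    { verts := Set.univ
      Adj := fun x y => (x = a ∧ y = b) ∨ (x = b ∧ y = a) ∨
        ∃ (hx : x ∈ ({a, b}ᶜ : Set V)) (hy : y ∈ ({a, b}ᶜ : Set V)), M.Adj ⟨x, hx⟩ ⟨y, hy⟩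
      adj_sub := by
        rintro x y (⟨rfl, rfl⟩ | ⟨rfl, rfl⟩ | ⟨hx, hy, h⟩)
        · exact hab
        · exact hab.symm
        · exact M.adj_sub h
      edge_vert := fun _ => Set.mem_univ _
      symm := by
        constructor
        rintro x y (⟨rfl, rfl⟩ | ⟨rfl, rfl⟩ | ⟨hx, hy, h⟩)
        · exact Or.inr (Or.inl ⟨rfl, rfl⟩)
        · exact Or.inl ⟨rfl, rfl⟩
        · exact Or.inr (Or.inr ⟨hy, hx, h.symm⟩) }
  have hNadj : ∀ x y, N.Adj x y ↔ ((x = a ∧ y = b) ∨ (x = b ∧ y = a) ∨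
      ∃ (hx : x ∈ ({a, b}ᶜ : Set V)) (hy : y ∈ ({a, b}ᶜ : Set V)), M.Adj ⟨x, hx⟩ ⟨y, hy⟩) :=
    fun _ _ => Iff.rfl
  have hNab : N.Adj a b := Or.inl ⟨rfl, rfl⟩
  have hNpm : N.IsPerfectMatching := by
    constructor
    · intro v _
      by_cases hva : v = a
      · subst hva
        refine ⟨b, Or.inl ⟨rfl, rfl⟩, ?_⟩
        rintro y (⟨-, rfl⟩ | ⟨h, -⟩ | ⟨hx, -, -⟩)
        · rfl
        · exact absurd h hne
        · exact absurd hx haS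
      by_cases hvb : v = b
      · subst hvb
        refine ⟨a, Or.inr (Or.inl ⟨rfl, rfl⟩), ?_⟩
        rintro y (⟨h, -⟩ | ⟨-, rfl⟩ | ⟨hx, -, -⟩)
        · exact absurd h hne.symm
        · rfl
        · exact absurd hx hbS
      · have hvS : v ∈ ({a, b}ᶜ : Set V) := (hmemS v).mpr ⟨hva, hvb⟩
        obtain ⟨w, hw, hwu⟩ := hM.1 (hM.2 ⟨v, hvS⟩)
        refine ⟨↑w, Or.inr (Or.inr ⟨hvS, w.2, hw⟩), ?_⟩
        rintro y (⟨h, -⟩ | ⟨h, -⟩ | ⟨hv', hy, h⟩)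
        · exact absurd h hva
        · exact absurd h hvb
        · exact congrArg Subtype.val (hwu ⟨y, hy⟩ h)
    · intro v; exact Set.mem_univ v
  have hNM : ∀ x y : ({a, b}ᶜ : Set V), N.Adj ↑x ↑y ↔ M.Adj x y := by
    rintro ⟨x, hx⟩ ⟨y, hy⟩
    constructor
    · rintro (⟨h, -⟩ | ⟨h, -⟩ | ⟨hx', hy', h⟩)
      · exact absurd h ((hmemS x).mp hx).1
      · exact absurd h ((hmemS x).mp hx).2
      · exact h
    · intro h
      exact Or.inr (Or.inr ⟨hx, hy, h⟩)
  have huniqN : ∀ N' : G.Subgraph, N'.IsPerfectMatching → N' = N := by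
    intro N' hN'
    obtain ⟨wa, hwa, hwau⟩ := hN'.1 (hN'.2 a)
    have hwab : wa = b := (hleaf wa).mp (N'.adj_sub hwa)
    have hA : ∀ y, N'.Adj a y → y = b := fun y hy => (hwau y hy).trans hwab
    have hwa' : N'.Adj a b := hwab ▸ hwa
    obtain ⟨wb, hwb, hwbu⟩ := hN'.1 (hN'.2 b)
    have hwba : wb = a := (hwbu a hwa'.symm).symm
    have hB : ∀ y, N'.Adj b y → y = a := fun y hy => (hwbu y hy).trans hwba
    have hpart : ∀ v, v ∈ ({a, b}ᶜ : Set V) → ∀ w, N'.Adj v w → w ∈ ({a, b}ᶜ : Set V) := by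
      intro v hv w h
      rw [hmemS]
      constructor
      · rintro rfl
        exact ((hmemS v).mp hv).2 (hA v h.symm)
      · rintro rfl
        exact ((hmemS v).mp hv).1 (hB v h.symm)
    let M' : (G.induce ({a, b}ᶜ : Set V)).Subgraph :=
      { verts := Set.univ
        Adj := fun x y => N'.Adj ↑x ↑y
        adj_sub := fun h => N'.adj_sub h
        edge_vert := fun _ => Set.mem_univ _
        symm := ⟨fun x y h => h.symm⟩ }
    have hM'pm : M'.IsPerfectMatching := by
      constructor
      · rintro ⟨v, hv⟩ -
        obtain ⟨w, hw, hwu⟩ := hN'.1 (hN'.2 v)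
        have hwS : w ∈ ({a, b}ᶜ : Set V) := hpart v hv w hw
        refine ⟨⟨w, hwS⟩, hw, ?_⟩
        rintro ⟨y, hy⟩ h
        exact Subtype.ext (hwu y h)
      · intro v; exact Set.mem_univ v
    have hMM : M' = M := huniq M' hM'pm
    apply Subgraph.ext
    · exact hN'.2.verts_eq_univ
    · ext x y
      rw [hNadj]
      constructor
      · intro h
        by_cases hxa : x = a
        · subst hxa
          exact Or.inl ⟨rfl, hA y h⟩
        by_cases hxb : x = b
        · subst hxb
          exact Or.inr (Or.inl ⟨rfl, hB y h⟩)
        · have hxS : x ∈ ({a, b}ᶜ : Set V) := (hmemS x).mpr ⟨hxa, hxb⟩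
          have hyS : y ∈ ({a, b}ᶜ : Set V) := hpart x hxS y h
          exact Or.inr (Or.inr ⟨hxS, hyS,
            hMM ▸ (show M'.Adj ⟨x, hxS⟩ ⟨y, hyS⟩ from h)⟩)
      · rintro (⟨rfl, rfl⟩ | ⟨rfl, rfl⟩ | ⟨hx, hy, hMadj⟩)
        · exact hwa'
        · exact hwa'.symm
        · show M'.Adj ⟨x, hx⟩ ⟨y, hy⟩
          rw [hMM]
          exact hMadj
  -- counting
  have hc2 : Fintype.card ↥({a, b} : Set V) = 2 := by
    rw [← Nat.card_eq_fintype_card, Nat.card_coe_set_eq, Set.ncard_pair hne]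
  have hcS : Fintype.card ({a, b}ᶜ : Set V) = Fintype.card V - 2 := by
    rw [Fintype.card_compl_set, hc2]
  have hVge : 2 ≤ Fintype.card V := by
    have h := Set.ncard_le_ncard (Set.subset_univ ({a, b} : Set V)) Set.finite_univ
    rwa [Set.ncard_pair hne, Set.ncard_univ, Nat.card_eq_fintype_card] at h
  have hMv : M.verts.ncard = 2 * M.edgeSet.ncard := matching_verts_ncard hM.1
  have hMuniv : M.verts = Set.univ := hM.2.verts_eq_univ
  have hSm : Fintype.card ({a, b}ᶜ : Set V) = 2 * M.edgeSet.ncard := by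
    rw [← hMv, hMuniv, Set.ncard_univ, Nat.card_eq_fintype_card]
  -- matchNum of the induced graph
  have hmu' : matchNum (G.induce ({a, b}ᶜ : Set V)) = M.edgeSet.ncard := by
    obtain ⟨M'', hm'', hcard''⟩ := matchNum_spec (G.induce ({a, b}ᶜ : Set V))
    have h1 : M''.verts.ncard = 2 * M''.edgeSet.ncard := matching_verts_ncard hm''
    have h2 : M''.verts.ncard ≤ Fintype.card ({a, b}ᶜ : Set V) := by
      have := Set.ncard_le_ncard (Set.subset_univ M''.verts) Set.finite_univ
      rwa [Set.ncard_univ, Nat.card_eq_fintype_card] at this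
    have h3 := le_matchNum _ M hM.1
    omega
  have hal' : _root_.indepNum (G.induce ({a, b}ᶜ : Set V)) = M.edgeSet.ncard := by omega
  -- independence number lower bound for G
  have hαG : M.edgeSet.ncard + 1 ≤ _root_.indepNum G := by
    obtain ⟨s', hs', hcards'⟩ := indepNum_spec (G.induce ({a, b}ᶜ : Set V))
    have has : a ∉ s'.image Subtype.val := by
      simp only [Finset.mem_image, not_exists]
      rintro ⟨x, hx⟩ ⟨-, h⟩
      exact haS (h ▸ hx)
    have hcard : (insert a (s'.image Subtype.val)).card = M.edgeSet.ncard + 1 := by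
      rw [Finset.card_insert_of_notMem has,
        Finset.card_image_of_injective _ Subtype.val_injective, hcards', hal']
    have hind : _root_.IsIndepSet G ↑(insert a (s'.image Subtype.val)) := by
      intro u hu v hv hadj
      simp only [Finset.coe_insert, Set.mem_insert_iff, Finset.coe_image, Set.mem_image,
        Finset.mem_coe] at hu hv
      rcases hu with rfl | ⟨u', hu', rfl⟩
      · rcases hv with rfl | ⟨v', hv', rfl⟩
        · exact G.irrefl hadj
        · exact ((hmemS _).mp v'.2).2 ((hleaf _).mp hadj)
      · rcases hv with rfl | ⟨v', hv', rfl⟩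
        · exact ((hmemS _).mp u'.2).2 ((hleaf _).mp hadj.symm)
        · exact hs' (Finset.mem_coe.mpr hu') (Finset.mem_coe.mpr hv') hadj
    have := le_indepNum G _ hind
    omega
  -- matching number lower bound for G
  have hμG : M.edgeSet.ncard + 1 ≤ matchNum G := by
    have h1 : N.verts.ncard = 2 * N.edgeSet.ncard := matching_verts_ncard hNpm.1
    have h2 : N.verts.ncard = Fintype.card V := by
      show (Set.univ : Set V).ncard = _
      rw [Set.ncard_univ, Nat.card_eq_fintype_card]
    have h3 := le_matchNum G N hNpm.1
    omega
  have hupper : _root_.indepNum G + matchNum G ≤ Fintype.card V := by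
    obtain ⟨s0, hs0, hc0⟩ := indepNum_spec G
    obtain ⟨M0, hm0, hcM0⟩ := matchNum_spec G
    rw [← hc0, ← hcM0]
    exact indep_add_matching_le G s0 hs0 M0 hm0
  exact ⟨by omega, N, hNpm, hNab, hNM, huniqN⟩
end

section
/- A connected bipartite graph G has a perfect matching if and only if core(G) = ∅, where core(G) is the intersection of all maximum independent sets of G. -/
open SimpleGraph

attribute [local instance] Classical.propDecidable

variable {V : Type*}

section Aux
variable (G : SimpleGraph V) [Fintype V]

lemma indepNum_bddAbove :
    BddAbove {n | ∃ s : Finset V, _root_.IsIndepSet G ↑s ∧ s.card = n} :=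
  ⟨Fintype.card V, by rintro n ⟨s, -, rfl⟩; exact s.card_le_univ⟩

variable {G}

lemma card_le_indepNum {s : Finset V} (h : _root_.IsIndepSet G ↑s) : s.card ≤ _root_.indepNum G :=
  le_csSup (indepNum_bddAbove G) ⟨s, h, rfl⟩

variable (G)

lemma exists_isMaxIndepSet : ∃ s : Finset V, IsMaxIndepSet G s := by
  have h := Nat.sSup_mem (s := {n | ∃ s : Finset V, _root_.IsIndepSet G ↑s ∧ s.card = n})
    ⟨0, ∅, by intro a ha; simp at ha, by simp⟩ (indepNum_bddAbove G)
  obtain ⟨s, h1, h2⟩ := h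
  exact ⟨s, h1, h2⟩

variable {G}

/-- Key lattice lemma: if the core is empty, the complement of each side of the
bipartition has cardinality equal to the independence number. -/
lemma side_card (A : Finset V)
    (hA : ∀ ⦃a b⦄, G.Adj a b → (a ∈ A ↔ b ∉ A))
    (hcore : core G = ∅) : (Finset.univ \ A).card = _root_.indepNum G := by
  classical
  have hindepB : _root_.IsIndepSet G ↑(Finset.univ \ A) := by
    intro a ha b hb hadj
    simp only [Finset.coe_sdiff, Finset.coe_univ, Set.mem_diff, Set.mem_univ, true_and,
      Finset.mem_coe] at ha hb
    exact ha ((hA hadj).mpr hb)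
  have hBle : (Finset.univ \ A).card ≤ _root_.indepNum G := card_le_indepNum hindepB
  obtain ⟨t0, ht0⟩ := exists_isMaxIndepSet G
  set Ω : Finset (Finset V) := Finset.univ.filter (fun s => IsMaxIndepSet G s) with hΩ
  have hΩne : Ω.Nonempty := ⟨t0, by simp [hΩ, ht0]⟩
  obtain ⟨s0, hs0Ω, hmin⟩ := Finset.exists_min_image Ω (fun s => (s ∩ A).card) hΩne
  have hs0 : IsMaxIndepSet G s0 := by simpa [hΩ] using hs0Ω
  have hsub : ∀ v ∈ s0 ∩ A, v ∈ core G := by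
    intro v hv t ht
    set m : Finset V := (s0 ∩ t ∩ A) ∪ ((s0 ∪ t) \ A) with hm
    set j : Finset V := ((s0 ∪ t) ∩ A) ∪ ((s0 ∩ t) \ A) with hj
    have hmj_union : m ∪ j = s0 ∪ t := by
      ext x; by_cases hx : x ∈ A <;> simp [hm, hj, hx] <;> tauto
    have hmj_inter : m ∩ j = s0 ∩ t := by
      ext x; by_cases hx : x ∈ A <;> simp [hm, hj, hx] <;> tauto
    have hmA : m ∩ A = s0 ∩ t ∩ A := by
      ext x; by_cases hx : x ∈ A <;> simp [hm, hx] <;> tauto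
    have hmi : _root_.IsIndepSet G ↑m := by
      intro a ha b hb hadj
      simp only [Finset.mem_coe, hm, Finset.mem_union, Finset.mem_inter, Finset.mem_sdiff] at ha hb
      have hone := hA hadj
      rcases ha with ⟨⟨ha0, hat⟩, haA⟩ | ⟨hab, haA⟩ <;>
        rcases hb with ⟨⟨hb0, hbt⟩, hbA⟩ | ⟨hbb, hbA⟩
      · exact (hone.mp haA) hbA
      · rcases hbb with hb0 | hbt
        · exact hs0.1 (Finset.mem_coe.mpr ha0) (Finset.mem_coe.mpr hb0) hadj
        · exact ht.1 (Finset.mem_coe.mpr hat) (Finset.mem_coe.mpr hbt) hadj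
      · rcases hab with ha0 | hat
        · exact hs0.1 (Finset.mem_coe.mpr ha0) (Finset.mem_coe.mpr hb0) hadj
        · exact ht.1 (Finset.mem_coe.mpr hat) (Finset.mem_coe.mpr hbt) hadj
      · exact haA (hone.mpr hbA)
    have hji : _root_.IsIndepSet G ↑j := by
      intro a ha b hb hadj
      simp only [Finset.mem_coe, hj, Finset.mem_union, Finset.mem_inter, Finset.mem_sdiff] at ha hb
      have hone := hA hadj
      rcases ha with ⟨hab, haA⟩ | ⟨⟨ha0, hat⟩, haA⟩ <;>
        rcases hb with ⟨hbb, hbA⟩ | ⟨⟨hb0, hbt⟩, hbA⟩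
      · exact (hone.mp haA) hbA
      · rcases hab with ha0 | hat
        · exact hs0.1 (Finset.mem_coe.mpr ha0) (Finset.mem_coe.mpr hb0) hadj
        · exact ht.1 (Finset.mem_coe.mpr hat) (Finset.mem_coe.mpr hbt) hadj
      · rcases hbb with hb0 | hbt
        · exact hs0.1 (Finset.mem_coe.mpr ha0) (Finset.mem_coe.mpr hb0) hadj
        · exact ht.1 (Finset.mem_coe.mpr hat) (Finset.mem_coe.mpr hbt) hadj
      · exact haA (hone.mpr hbA)
    have hcards : m.card + j.card = s0.card + t.card := by
      have h1 := Finset.card_union_add_card_inter m j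
      rw [hmj_union, hmj_inter] at h1
      have h2 := Finset.card_union_add_card_inter s0 t
      omega
    have hmle := card_le_indepNum hmi
    have hjle := card_le_indepNum hji
    have hmcard : m.card = _root_.indepNum G := by
      have h1 := hs0.2; have h2 := ht.2; omega
    have hmΩ : m ∈ Ω := by simp [hΩ]; exact ⟨hmi, hmcard⟩
    have h3 := hmin m hmΩ
    simp only [hmA] at h3
    have h4 : s0 ∩ t ∩ A ⊆ s0 ∩ A := by
      intro x hx
      simp only [Finset.mem_inter] at hx ⊢
      exact ⟨hx.1.1, hx.2⟩
    have h5 : s0 ∩ t ∩ A = s0 ∩ A := Finset.eq_of_subset_of_card_le h4 h3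
    rw [← h5] at hv
    simp only [Finset.mem_inter] at hv
    exact hv.1.2
  have hempty : s0 ∩ A = ∅ := by
    rw [Finset.eq_empty_iff_forall_notMem]
    intro v hv
    have := hsub v hv
    rw [hcore] at this
    exact this
  have hsubB : s0 ⊆ Finset.univ \ A := by
    intro x hx
    simp only [Finset.mem_sdiff, Finset.mem_univ, true_and]
    intro hxA
    have : x ∈ s0 ∩ A := Finset.mem_inter.mpr ⟨hx, hxA⟩
    rw [hempty] at this; simp at this
  have := Finset.card_le_card hsubB
  have h1 := hs0.2
  omega

end Aux

theorem stmt9 (G : SimpleGraph V) [Fintype V] (hconn : G.Connected) (hbip : G.Colorable 2) :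
    (∃ M : G.Subgraph, M.IsPerfectMatching) ↔ core G = ∅ := by
  classical
  obtain ⟨c⟩ := hbip
  set A : Finset V := Finset.univ.filter (fun v => c v = 0) with hAdef
  have fin2 : ∀ x y : Fin 2, x ≠ y → (x = 0 ↔ ¬ y = 0) := by decide
  have hA : ∀ ⦃a b⦄, G.Adj a b → (a ∈ A ↔ b ∉ A) := by
    intro a b hadj
    have := fin2 _ _ (c.valid hadj)
    simp only [hAdef, Finset.mem_filter, Finset.mem_univ, true_and]
    exact this
  have hAcompl : ∀ ⦃a b⦄, G.Adj a b → (a ∈ Finset.univ \ A ↔ b ∉ Finset.univ \ A) := by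
    intro a b hadj
    have h := hA hadj
    have h' := hA hadj.symm
    simp only [Finset.mem_sdiff, Finset.mem_univ, true_and]
    tauto
  have hAB : Finset.univ \ (Finset.univ \ A) = A := by
    ext x; simp [em]
  have hcardAB : A.card + (Finset.univ \ A).card = Fintype.card V := by
    rw [Finset.card_sdiff_of_subset (Finset.subset_univ A), Finset.card_univ]
    have := Finset.card_le_univ A
    omega
  have hindepA : _root_.IsIndepSet G ↑A := by
    intro a ha b hb hadj
    exact ((hA hadj).mp (Finset.mem_coe.mp ha)) (Finset.mem_coe.mp hb)
  have hindepB : _root_.IsIndepSet G ↑(Finset.univ \ A) := by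
    intro a ha b hb hadj
    exact ((hAcompl hadj).mp (Finset.mem_coe.mp ha)) (Finset.mem_coe.mp hb)
  constructor
  · -- perfect matching implies empty core
    rintro ⟨M, hM⟩
    -- the partner function
    have hpart : ∀ v : V, ∃! w, M.Adj v w := fun v => hM.1 (hM.2 v)
    set p : V → V := fun v => (hpart v).choose with hp
    have hpadj : ∀ v, M.Adj v (p v) := fun v => (hpart v).choose_spec.1
    have hpuniq : ∀ v w, M.Adj v w → w = p v := fun v w h => (hpart v).choose_spec.2 w h
    have hpinj : Function.Injective p := by
      intro u v huv
      have h1 : M.Adj (p u) u := (hpadj u).symm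
      have h2 : M.Adj (p u) v := by rw [huv]; exact (hpadj v).symm
      rw [hpuniq _ _ h1, hpuniq _ _ h2]
    -- any independent set has size at most |V|/2
    have hhalf : ∀ s : Finset V, _root_.IsIndepSet G ↑s → 2 * s.card ≤ Fintype.card V := by
      intro s hs
      have hdisj : Disjoint s (s.image p) := by
        rw [Finset.disjoint_left]
        intro x hx hx'
        obtain ⟨v, hv, hvx⟩ := Finset.mem_image.mp hx'
        subst hvx
        exact hs (Finset.mem_coe.mpr hv) (Finset.mem_coe.mpr hx) (M.adj_sub (hpadj v))
      have := Finset.card_le_univ (s ∪ s.image p)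
      rw [Finset.card_union_of_disjoint hdisj,
        Finset.card_image_of_injective _ hpinj] at this
      omega
    obtain ⟨t0, ht0⟩ := exists_isMaxIndepSet G
    have hαle : 2 * _root_.indepNum G ≤ Fintype.card V := by
      have := hhalf t0 ht0.1
      rw [ht0.2] at this; exact this
    have h1 : A.card ≤ _root_.indepNum G := card_le_indepNum hindepA
    have h2 : (Finset.univ \ A).card ≤ _root_.indepNum G := card_le_indepNum hindepB
    have hAmax : IsMaxIndepSet G A := ⟨hindepA, by omega⟩
    have hBmax : IsMaxIndepSet G (Finset.univ \ A) := ⟨hindepB, by omega⟩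
    ext v
    simp only [Set.mem_empty_iff_false, iff_false]
    intro hv
    have hvA := hv A hAmax
    have hvB := hv _ hBmax
    simp only [Finset.mem_sdiff] at hvB
    exact hvB.2 hvA
  · -- empty core implies perfect matching
    intro hcore
    have hBcard : (Finset.univ \ A).card = _root_.indepNum G := side_card A hA hcore
    have hAcard : A.card = _root_.indepNum G := by
      have := side_card (Finset.univ \ A) hAcompl hcore
      rwa [hAB] at this
    set B : Finset V := Finset.univ \ A with hBdef
    -- Hall's condition for A into B
    set t : ↥A → Finset V := fun x => Finset.univ.filter (fun w => G.Adj ↑x w) with htdef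
    have hthm : ∀ s : Finset ↥A, s.card ≤ (s.biUnion t).card := by
      intro W
      set N : Finset V := W.biUnion t with hNdef
      have hNB : N ⊆ B := by
        intro w hw
        simp only [hNdef, Finset.mem_biUnion] at hw
        obtain ⟨x, hx, hw'⟩ := hw
        simp only [htdef, Finset.mem_filter, Finset.mem_univ, true_and] at hw'
        simp only [hBdef, Finset.mem_sdiff, Finset.mem_univ, true_and]
        exact (hA hw').mp x.2
      set u : Finset V := (B \ N) ∪ W.image Subtype.val with hudef
      have himW : ∀ x ∈ W.image Subtype.val, x ∈ A := by
        intro x hx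
        obtain ⟨y, _, hy⟩ := Finset.mem_image.mp hx
        subst hy; exact y.2
      have hui : _root_.IsIndepSet G ↑u := by
        intro a ha b hb hadj
        simp only [Finset.mem_coe, hudef, Finset.mem_union, Finset.mem_sdiff] at ha hb
        rcases ha with ⟨haB, haN⟩ | haW <;> rcases hb with ⟨hbB, hbN⟩ | hbW
        · simp only [hBdef, Finset.mem_sdiff, Finset.mem_univ, true_and] at haB hbB
          exact haB ((hA hadj).mpr hbB)
        · -- a ∈ B \ N, b ∈ image W : then a ∈ N, contradiction
          obtain ⟨y, hyW, hy⟩ := Finset.mem_image.mp hbW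
          apply haN
          simp only [hNdef, Finset.mem_biUnion]
          refine ⟨y, hyW, ?_⟩
          simp only [htdef, Finset.mem_filter, Finset.mem_univ, true_and]
          rw [hy]; exact hadj.symm
        · obtain ⟨y, hyW, hy⟩ := Finset.mem_image.mp haW
          apply hbN
          simp only [hNdef, Finset.mem_biUnion]
          refine ⟨y, hyW, ?_⟩
          simp only [htdef, Finset.mem_filter, Finset.mem_univ, true_and]
          rw [hy]; exact hadj
        · exact absurd (himW b hbW) ((hA hadj).mp (himW a haW))
      have hule : u.card ≤ _root_.indepNum G := card_le_indepNum hui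
      have hdisj : Disjoint (B \ N) (W.image Subtype.val) := by
        rw [Finset.disjoint_left]
        intro x hx hx'
        have hxB : x ∈ B := (Finset.mem_sdiff.mp hx).1
        simp only [hBdef, Finset.mem_sdiff] at hxB
        exact hxB.2 (himW x hx')
      have hcardu : u.card = (B \ N).card + W.card := by
        rw [hudef, Finset.card_union_of_disjoint hdisj,
          Finset.card_image_of_injective _ Subtype.val_injective]
      have hcardBN : (B \ N).card = B.card - N.card := Finset.card_sdiff_of_subset hNB
      have hNle : N.card ≤ B.card := Finset.card_le_card hNB
      omega
    obtain ⟨f, hfinj, hft⟩ := (Finset.all_card_le_biUnion_card_iff_exists_injective t).mp hthm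
    have hfadj : ∀ x : ↥A, G.Adj ↑x (f x) := by
      intro x
      have := hft x
      simp only [htdef, Finset.mem_filter, Finset.mem_univ, true_and] at this
      exact this
    have hfB : ∀ x : ↥A, f x ∈ B := by
      intro x
      simp only [hBdef, Finset.mem_sdiff, Finset.mem_univ, true_and]
      exact (hA (hfadj x)).mp x.2
    -- f is a bijection onto B
    have hfsurj : ∀ b ∈ B, ∃ x : ↥A, f x = b := by
      intro b hb
      set F : Finset V := Finset.univ.image f with hF
      have hFB : F ⊆ B := by
        intro x hx
        obtain ⟨y, _, hy⟩ := Finset.mem_image.mp hx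
        subst hy; exact hfB y
      have hFcard : F.card = B.card := by
        rw [hF, Finset.card_image_of_injective _ hfinj, Finset.card_univ,
          Fintype.card_coe]
        omega
      have : F = B := Finset.eq_of_subset_of_card_le hFB (le_of_eq hFcard.symm)
      rw [← this] at hb
      obtain ⟨y, _, hy⟩ := Finset.mem_image.mp hb
      exact ⟨y, hy⟩
    -- build the perfect matching
    refine ⟨⟨Set.univ, fun a b => ∃ x : ↥A, (a = ↑x ∧ b = f x) ∨ (b = ↑x ∧ a = f x),
      ?_, ?_, ?_⟩, ?_, fun v => trivial⟩
    · rintro a b ⟨x, ⟨rfl, rfl⟩ | ⟨rfl, rfl⟩⟩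
      · exact hfadj x
      · exact (hfadj x).symm
    · intro a b _; trivial
    · refine ⟨?_⟩
      rintro a b ⟨x, h | h⟩
      exacts [⟨x, Or.inr h⟩, ⟨x, Or.inl h⟩]
    · intro v _
      by_cases hv : v ∈ A
      · refine ⟨f ⟨v, hv⟩, ⟨⟨v, hv⟩, Or.inl ⟨rfl, rfl⟩⟩, ?_⟩
        rintro w ⟨x, ⟨hx1, hx2⟩ | ⟨hx1, hx2⟩⟩
        · have : x = ⟨v, hv⟩ := Subtype.ext hx1.symm
          rw [this] at hx2; exact hx2
        · exfalso
          have := hfB x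
          rw [← hx2] at this
          simp only [hBdef, Finset.mem_sdiff] at this
          exact this.2 hv
      · have hvB : v ∈ B := by
          simp only [hBdef, Finset.mem_sdiff, Finset.mem_univ, true_and]; exact hv
        obtain ⟨x, hx⟩ := hfsurj v hvB
        refine ⟨↑x, ⟨x, Or.inr ⟨rfl, hx.symm⟩⟩, ?_⟩
        rintro w ⟨y, ⟨hy1, hy2⟩ | ⟨hy1, hy2⟩⟩
        · exact absurd (hy1 ▸ y.2) hv
        · have : y = x := hfinj (by rw [hx, ← hy2])
          rw [hy1, this]
end

section
/- If a unicyclic non-bipartite graph G has a perfect matching, then G is a König-Egerváry graph, i.e., α(G) + μ(G) = |V(G)|. -/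
open SimpleGraph

attribute [local instance] Classical.propDecidable

variable {V : Type*}

lemma matching_verts_card {G : SimpleGraph V} [Fintype V] {M : G.Subgraph}
    (h : M.IsMatching) : M.verts.ncard = 2 * M.edgeSet.ncard := by
  classical
  have hvf := M.verts.toFinite
  have hef := M.edgeSet.toFinite
  set f : Sym2 V → Finset V := fun e => Finset.univ.filter (· ∈ e) with hf
  have hmem : ∀ e x, x ∈ f e ↔ x ∈ e := by intro e x; simp [hf]
  have h1 : hvf.toFinset = hef.toFinset.biUnion f := by
    ext z
    simp only [Set.Finite.mem_toFinset, Finset.mem_biUnion, hmem]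
    constructor
    · intro hz
      obtain ⟨w, hw, -⟩ := h hz
      exact ⟨s(z, w), hw, by simp⟩
    · rintro ⟨e, he, hze⟩
      obtain ⟨w, rfl⟩ := Sym2.mem_iff_exists.mp hze
      exact M.edge_vert ((Subgraph.mem_edgeSet).mp he)
  have h2 : ∀ e ∈ hef.toFinset, (f e).card = 2 := by
    intro e he
    rw [Set.Finite.mem_toFinset] at he
    have hd : ¬ e.IsDiag := by
      have : e ∈ G.edgeSet := M.edgeSet_subset he
      exact G.not_isDiag_of_mem_edgeSet this
    induction e with
    | _ a b =>
      have hab : a ≠ b := by simpa using hd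
      have : f s(a, b) = {a, b} := by
        ext z; simp [hmem, Finset.mem_insert]
      rw [this, Finset.card_pair hab]
  have h3 : ∀ e ∈ hef.toFinset, ∀ e' ∈ hef.toFinset, e ≠ e' → Disjoint (f e) (f e') := by
    intro e he e' he' hne
    rw [Set.Finite.mem_toFinset] at he he'
    rw [Finset.disjoint_left]
    intro z hz hz'
    rw [hmem] at hz hz'
    obtain ⟨w, rfl⟩ := Sym2.mem_iff_exists.mp hz
    obtain ⟨w', rfl⟩ := Sym2.mem_iff_exists.mp hz'
    have h1 := Subgraph.mem_edgeSet.mp he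
    have h2 := Subgraph.mem_edgeSet.mp he'
    obtain ⟨u, -, hu⟩ := h (M.edge_vert h1)
    exact hne (by rw [hu w h1, hu w' h2])
  rw [Set.ncard_eq_toFinset_card _ hvf, Set.ncard_eq_toFinset_card _ hef, h1,
    Finset.card_biUnion h3]
  rw [Finset.sum_congr rfl h2, Finset.sum_const, smul_eq_mul, mul_comm]

lemma two_mul_matchNum {G : SimpleGraph V} [Fintype V] {M : G.Subgraph}
    (hM : M.IsPerfectMatching) : 2 * matchNum G = Fintype.card V := by
  have hMc : 2 * M.edgeSet.ncard = Fintype.card V := by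
    rw [← matching_verts_card hM.1, hM.2.verts_eq_univ, Set.ncard_univ, Nat.card_eq_fintype_card]
  have hub : ∀ m ∈ {n | ∃ N : G.Subgraph, N.IsMatching ∧ N.edgeSet.ncard = n},
      m ≤ M.edgeSet.ncard := by
    rintro m ⟨N, hN, rfl⟩
    have h1 : 2 * N.edgeSet.ncard ≤ Fintype.card V := by
      rw [← matching_verts_card hN]
      have := Set.ncard_le_ncard (Set.subset_univ N.verts) Set.finite_univ
      rwa [Set.ncard_univ, Nat.card_eq_fintype_card] at this
    omega
  have : matchNum G = M.edgeSet.ncard :=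
    le_antisymm (csSup_le ⟨M.edgeSet.ncard, M, hM.1, rfl⟩ hub)
      (le_csSup ⟨M.edgeSet.ncard, hub⟩ ⟨M, hM.1, rfl⟩)
  omega

lemma indep_card_le {G : SimpleGraph V} [Fintype V] {M : G.Subgraph}
    (hM : M.IsPerfectMatching) (S : Finset V) (hS : _root_.IsIndepSet G ↑S) :
    S.card ≤ M.edgeSet.ncard := by
  classical
  have hpm := Subgraph.isPerfectMatching_iff.mp hM
  set f : V → Sym2 V := fun v => s(v, (hpm v).choose) with hf
  have hadj : ∀ v, M.Adj v ((hpm v).choose) := fun v => (hpm v).choose_spec.1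
  have hsub : f '' ↑S ⊆ M.edgeSet := by
    rintro e ⟨v, -, rfl⟩
    exact Subgraph.mem_edgeSet.mpr (hadj v)
  have hinj : Set.InjOn f ↑S := by
    intro a ha b hb hfe
    rw [hf] at hfe
    simp only [Sym2.eq, Sym2.rel_iff', Prod.mk.injEq, Prod.swap_prod_mk] at hfe
    rcases hfe with ⟨h1, -⟩ | ⟨h1, h2⟩
    · exact h1
    · exact absurd (M.adj_sub (h2 ▸ hadj a)) (hS ha hb)
  calc S.card = (↑S : Set V).ncard := (Set.ncard_coe_finset S).symm
    _ = (f '' ↑S).ncard := (Set.ncard_image_of_injOn hinj).symm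
    _ ≤ M.edgeSet.ncard := Set.ncard_le_ncard hsub (M.edgeSet.toFinite)

lemma exists_two_leaves (F : SimpleGraph V) [Fintype V]
    (hF : ∀ ⦃u v : V⦄ (p q : F.Path u v), p = q) (s : Finset V)
    (hnbr : ∀ v ∈ s, ∃ u ∈ s, F.Adj v u) (hne : s.Nonempty) :
    ∃ a ∈ s, ∃ b ∈ s, a ≠ b ∧
      (∀ w ∈ s, F.Adj a w → ∀ w' ∈ s, F.Adj a w' → w = w') ∧
      (∀ w ∈ s, F.Adj b w → ∀ w' ∈ s, F.Adj b w' → w = w') := by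
  classical
  set P : Set ℕ := {n | ∃ (a b : V) (p : F.Walk a b), p.IsPath ∧
    (∀ w ∈ p.support, w ∈ s) ∧ p.length = n} with hP
  have hP1 : 1 ∈ P := by
    obtain ⟨v, hv⟩ := hne
    obtain ⟨u, hu, hadj⟩ := hnbr v hv
    refine ⟨v, u, Walk.cons hadj Walk.nil, ?_, ?_, rfl⟩
    · simp [Walk.cons_isPath_iff, hadj.ne]
    · intro w hw
      simp only [Walk.support_cons, Walk.support_nil, List.mem_cons,
        List.mem_singleton, List.not_mem_nil, or_false] at hw
      rcases hw with rfl | rfl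
      · exact hv
      · exact hu
  have hbdd : BddAbove P := by
    refine ⟨Fintype.card V, ?_⟩
    rintro n ⟨a, b, p, hp, -, rfl⟩
    exact le_of_lt hp.length_lt
  set N := sSup P with hNdef
  have hN1 : 1 ≤ N := le_csSup hbdd hP1
  obtain ⟨a, b, p, hp, hsupp, hlen⟩ := Nat.sSup_mem ⟨1, hP1⟩ hbdd
  -- key: for any maximum path, the endpoint has a unique neighbour in s
  have key2 : ∀ (a b : V) (p : F.Walk a b), p.IsPath → (∀ w ∈ p.support, w ∈ s) →
      p.length = N → (∀ w ∈ s, F.Adj b w → ∀ w' ∈ s, F.Adj b w' → w = w') := by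
    intro a b p hp hsupp hlen
    -- every s-neighbour of b lies on p
    have hmem : ∀ c ∈ s, F.Adj b c → c ∈ p.support := by
      intro c hcs hadj
      by_contra hc
      have hp' : (p.concat hadj).IsPath := by
        rw [← Walk.isPath_reverse_iff, Walk.reverse_concat, Walk.cons_isPath_iff]
        exact ⟨hp.reverse, by simpa [Walk.support_reverse] using hc⟩
      have hmem' : (p.concat hadj).length ∈ P := by
        refine ⟨a, c, p.concat hadj, hp', ?_, rfl⟩
        intro w hw
        rw [Walk.support_concat] at hw
        rw [List.mem_append, List.mem_singleton] at hw
        rcases hw with hw | rfl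
        · exact hsupp w hw
        · exact hcs
      have := le_csSup hbdd hmem'
      rw [Walk.length_concat, hlen] at this
      omega
    have hlast : ∀ c (hcs : c ∈ s) (hadj : F.Adj b c),
        p.support.dropLast.getLast? = some c := by
      intro c hcs hadj
      have hc : c ∈ p.support := hmem c hcs hadj
      have hq : (p.dropUntil c hc).reverse.IsPath := (hp.dropUntil hc).reverse
      have hr : (Walk.cons hadj Walk.nil : F.Walk b c).IsPath := by
        simp [Walk.cons_isPath_iff, hadj.ne]
      have heq : (⟨(p.dropUntil c hc).reverse, hq⟩ : F.Path b c) = ⟨Walk.cons hadj Walk.nil, hr⟩ :=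
        hF _ _
      have heq' : p.dropUntil c hc = (Walk.cons hadj Walk.nil).reverse := by
        have := congrArg Subtype.val heq
        simp only at this
        rw [← this, Walk.reverse_reverse]
      have hsup2 : (p.dropUntil c hc).support = [c, b] := by
        rw [heq']
        simp [Walk.support_reverse]
      have hdecomp : p.support = (p.takeUntil c hc).support ++ [b] := by
        conv_lhs => rw [← Walk.take_spec p hc]
        rw [Walk.support_append, hsup2]
        rfl
      rw [hdecomp, List.dropLast_concat]
      rw [List.getLast?_eq_getLast (Walk.support_ne_nil _)]
      rw [Walk.getLast_support]
    intro w hw haw w' hw' haw'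
    have h1 := hlast w hw haw
    have h2 := hlast w' hw' haw'
    rw [h1] at h2
    exact Option.some.inj h2
  have hab : a ≠ b := by
    rintro rfl
    have := (Walk.isPath_iff_eq_nil).mp hp
    subst this
    simp at hlen
    omega
  refine ⟨a, hsupp a p.start_mem_support, b, hsupp b p.end_mem_support, hab, ?_, ?_⟩
  · refine key2 b a p.reverse hp.reverse ?_ (by simp [hlen, hNdef])
    intro w hw
    exact hsupp w (by simpa [Walk.support_reverse] using hw)
  · exact key2 a b p hp hsupp hlen

lemma forest_matching_indep (F : SimpleGraph V) [Fintype V]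
    (hF : ∀ ⦃u v : V⦄ (p q : F.Path u v), p = q) :
    ∀ (n : ℕ) (s : Finset V) (M : F.Subgraph), s.card = n → M.IsMatching → M.verts = ↑s →
      ∀ x : V, ∃ S : Finset V, ↑S ⊆ (↑s : Set V) ∧ _root_.IsIndepSet F ↑S ∧
        2 * S.card = s.card ∧ x ∉ S := by
  intro n
  induction n using Nat.strong_induction_on with
  | _ n ih =>
  intro s M hcard hM hverts x
  rcases Finset.eq_empty_or_nonempty s with rfl | hne
  · exact ⟨∅, by simp, by simp [_root_.IsIndepSet], by simp, by simp⟩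
  have hnbr : ∀ v ∈ s, ∃ u ∈ s, F.Adj v u := by
    intro v hv
    have hvV : v ∈ M.verts := by rw [hverts]; exact_mod_cast hv
    obtain ⟨w, hw, -⟩ := hM hvV
    have hwV : w ∈ M.verts := M.edge_vert hw.symm
    rw [hverts] at hwV
    exact ⟨w, by exact_mod_cast hwV, M.adj_sub hw⟩
  obtain ⟨a, has, b, hbs, hab, hla, hlb⟩ := exists_two_leaves F hF s hnbr hne
  obtain ⟨v, hvs, hvx, hleaf⟩ :
      ∃ v ∈ s, v ≠ x ∧ (∀ w ∈ s, F.Adj v w → ∀ w' ∈ s, F.Adj v w' → w = w') := by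
    by_cases hxa : x = a
    · exact ⟨b, hbs, fun h => hab (hxa ▸ h).symm, hlb⟩
    · exact ⟨a, has, fun h => hxa h.symm, hla⟩
  have hvV : v ∈ M.verts := by rw [hverts]; exact_mod_cast hvs
  obtain ⟨u, hMvu, huniq⟩ := hM hvV
  have huV : u ∈ M.verts := M.edge_vert hMvu.symm
  have hus : u ∈ s := by rw [hverts] at huV; exact_mod_cast huV
  have hFvu : F.Adj v u := M.adj_sub hMvu
  have hvu : v ≠ u := hFvu.ne
  set s' : Finset V := (s.erase v).erase u with hs'
  have hvns' : v ∉ s' := by simp [hs', Finset.mem_erase]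
  have huns' : u ∉ s' := by simp [hs', Finset.mem_erase]
  have hs'sub : s' ⊆ s := (Finset.erase_subset _ _).trans (Finset.erase_subset _ _)
  have hmem' : ∀ y, y ∈ s' ↔ y ∈ s ∧ y ≠ v ∧ y ≠ u := by
    intro y; simp [hs', Finset.mem_erase]; tauto
  have hn2 : 2 ≤ n := by
    have : ({v, u} : Finset V) ⊆ s := by
      intro y hy; rcases Finset.mem_insert.mp hy with rfl | hy
      · exact hvs
      · exact (Finset.mem_singleton.mp hy) ▸ hus
    have h2 := Finset.card_le_card this
    rwa [Finset.card_pair hvu, hcard] at h2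
  have hcard' : s'.card = n - 2 := by
    rw [hs', Finset.card_erase_of_mem (Finset.mem_erase.mpr ⟨hvu.symm, hus⟩),
      Finset.card_erase_of_mem hvs, hcard]
    omega
  set M' := M.deleteVerts {v, u} with hM'def
  have hverts' : M'.verts = ↑s' := by
    rw [hM'def, Subgraph.deleteVerts_verts, hverts]
    ext y
    simp only [Set.mem_diff, Finset.coe_insert, Set.mem_insert_iff, Set.mem_singleton_iff,
      Finset.mem_coe, hmem' y]
    tauto
  have hM' : M'.IsMatching := by
    intro w hw
    rw [hM'def, Subgraph.deleteVerts_verts] at hw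
    obtain ⟨hwV, hwvu⟩ := hw
    have hwv : w ≠ v := fun h => hwvu (by simp [h])
    have hwu : w ≠ u := fun h => hwvu (by simp [h])
    obtain ⟨w', hMww', huniqw⟩ := hM hwV
    have hw'v : w' ≠ v := by
      rintro rfl
      exact hwu (huniq w hMww'.symm)
    have hw'u : w' ≠ u := by
      rintro rfl
      obtain ⟨z, hz, hzuniq⟩ := hM huV
      have h1 : w = z := hzuniq w hMww'.symm
      have h2 : v = z := hzuniq v hMvu.symm
      exact hwv (h1.trans h2.symm)
    refine ⟨w', ?_, ?_⟩
    · rw [hM'def]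
      exact Subgraph.deleteVerts_adj.mpr
        ⟨hwV, by simp [hwv, hwu], M.edge_vert hMww'.symm, by simp [hw'v, hw'u], hMww'⟩
    · intro y hy
      rw [hM'def] at hy
      exact huniqw y (Subgraph.deleteVerts_adj.mp hy).2.2.2.2
  obtain ⟨S', hS'sub, hS'ind, hS'card, hxS'⟩ :=
    ih (n - 2) (by omega) s' M' hcard' hM' hverts' x
  have hvS' : v ∉ S' := fun h => hvns' (by exact_mod_cast hS'sub h)
  refine ⟨insert v S', ?_, ?_, ?_, ?_⟩
  · rw [Finset.coe_insert]
    exact Set.insert_subset (by exact_mod_cast hvs)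
      (hS'sub.trans (by exact_mod_cast hs'sub))
  · intro a1 h1 b1 h2 hadj
    rw [Finset.coe_insert, Set.mem_insert_iff] at h1 h2
    rcases h1 with rfl | h1
    · rcases h2 with rfl | h2
      · exact F.irrefl hadj
      · have hb1s' : b1 ∈ s' := by exact_mod_cast hS'sub h2
        have hb1s : b1 ∈ s := hs'sub hb1s'
        have : b1 = u := hleaf b1 hb1s hadj u hus hFvu
        exact huns' (this ▸ hb1s')
    · rcases h2 with rfl | h2
      · have ha1s' : a1 ∈ s' := by exact_mod_cast hS'sub h1
        have ha1s : a1 ∈ s := hs'sub ha1s'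
        have : a1 = u := hleaf a1 ha1s hadj.symm u hus hFvu
        exact huns' (this ▸ ha1s')
      · exact hS'ind h1 h2 hadj
  · rw [Finset.card_insert_of_notMem hvS']
    omega
  · rw [Finset.mem_insert]
    push_neg
    exact ⟨fun h => hvx h.symm, hxS'⟩

lemma cycle_exists_edge_not_matching {G : SimpleGraph V} {v : V} {p : G.Walk v v}
    (hp : p.IsCycle) {M : G.Subgraph} (hM : M.IsMatching) :
    ∃ e ∈ p.edges, e ∉ M.edgeSet := by
  by_contra hcon
  push_neg at hcon
  have hlen := hp.three_le_length
  cases p with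
  | nil => exact hp.not_of_nil
  | cons hadj q =>
    rename_i w1
    have hqlen : 2 ≤ q.length := by
      rw [Walk.length_cons] at hlen; omega
    have hqrnil : ¬ q.reverse.Nil := by
      rw [Walk.not_nil_iff_lt_length, Walk.length_reverse]; omega
    obtain ⟨w2, hadj2, q2, hq2⟩ := Walk.not_nil_iff.mp hqrnil
    have he1 : s(v, w1) ∈ (Walk.cons hadj q).edges := by simp
    have he2q : s(v, w2) ∈ q.edges := by
      have : s(v, w2) ∈ q.reverse.edges := by rw [hq2]; simp
      rwa [Walk.edges_reverse, List.mem_reverse] at this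
    have he2 : s(v, w2) ∈ (Walk.cons hadj q).edges := by
      rw [Walk.edges_cons]; exact List.mem_cons_of_mem _ he2q
    have hM1 : M.Adj v w1 := Subgraph.mem_edgeSet.mp (hcon _ he1)
    have hM2 : M.Adj v w2 := Subgraph.mem_edgeSet.mp (hcon _ he2)
    obtain ⟨z, -, hzu⟩ := hM (M.edge_vert hM1)
    have hw12 : w1 = w2 := (hzu w1 hM1).trans (hzu w2 hM2).symm
    have hnodup := hp.isCircuit.isTrail.edges_nodup
    rw [Walk.edges_cons, List.nodup_cons] at hnodup
    exact hnodup.1 (hw12 ▸ he2q)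

theorem stmt11 (G : SimpleGraph V) [Fintype V] (huni : UniqueCycle G)
    (hodd : ∃ (v : V) (p : G.Walk v v), p.IsCycle ∧ Odd p.length)
    (hpm : ∃ M : G.Subgraph, M.IsPerfectMatching) :
    KonigEgervary G := by
  classical
  obtain ⟨M, hM⟩ := hpm
  obtain ⟨v0, p0, hp0, -⟩ := hodd
  obtain ⟨c, -, hcu⟩ := huni
  have hc0 : c = {e | e ∈ p0.edges} := (hcu _ ⟨v0, p0, hp0, rfl⟩).symm
  obtain ⟨e, he, heM⟩ := cycle_exists_edge_not_matching hp0 hM.1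
  revert he heM
  induction e using Sym2.ind with
  | _ x y =>
  intro he heM
  set G' := G.deleteEdges {s(x, y)} with hG'
  have hG'adj : ∀ a b : V, G'.Adj a b ↔ G.Adj a b ∧ s(a, b) ≠ s(x, y) := by
    intro a b
    rw [hG', deleteEdges_adj, Set.mem_singleton_iff]
  have hacyc : G'.IsAcyclic := by
    intro u q hq
    have hsub : ∀ e' ∈ q.edges, e' ∈ G.edgeSet := by
      intro e' he'
      have := q.edges_subset_edgeSet he'
      rw [hG', edgeSet_deleteEdges] at this
      exact this.1
    have hq' : (q.transfer G hsub).IsCycle := hq.transfer hsub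
    have hceq : c = {e'' | e'' ∈ (q.transfer G hsub).edges} :=
      (hcu _ ⟨u, q.transfer G hsub, hq', rfl⟩).symm
    have hexy : s(x, y) ∈ (q.transfer G hsub).edges := by
      have : s(x, y) ∈ c := by rw [hc0]; exact he
      rwa [hceq] at this
    rw [Walk.edges_transfer] at hexy
    have := q.edges_subset_edgeSet hexy
    rw [hG', edgeSet_deleteEdges] at this
    exact this.2 rfl
  have hpath := isAcyclic_iff_path_unique.mp hacyc
  set M'' : G'.Subgraph :=
    { verts := Set.univ
      Adj := M.Adj
      adj_sub := by
        intro a b hab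
        rw [hG'adj]
        refine ⟨M.adj_sub hab, fun h => heM ?_⟩
        rw [← h]
        exact Subgraph.mem_edgeSet.mpr hab
      edge_vert := fun _ => Set.mem_univ _
      symm := M.symm } with hM''
  have hM''m : M''.IsMatching := by
    intro w _
    exact hM.1 (hM.2 w)
  have hM''verts : M''.verts = ↑(Finset.univ : Finset V) := by
    rw [hM'']; exact Finset.coe_univ.symm
  obtain ⟨S, hSsub, hSind, hScard, hxS⟩ :=
    forest_matching_indep G' hpath Finset.univ.card Finset.univ M'' rfl hM''m hM''verts x
  have hScardV : 2 * S.card = Fintype.card V := by rwa [Finset.card_univ] at hScard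
  have hSindG : _root_.IsIndepSet G ↑S := by
    intro a ha b hb hadj
    by_cases hab : s(a, b) = s(x, y)
    · rw [Sym2.eq_iff] at hab
      rcases hab with ⟨rfl, -⟩ | ⟨-, rfl⟩
      · exact hxS (by exact_mod_cast ha)
      · exact hxS (by exact_mod_cast hb)
    · exact hSind ha hb ((hG'adj a b).mpr ⟨hadj, hab⟩)
  have hub : ∀ m ∈ {n | ∃ T : Finset V, _root_.IsIndepSet G ↑T ∧ T.card = n}, m ≤ S.card := by
    rintro m ⟨T, hT, rfl⟩
    have h1 := indep_card_le hM T hT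
    have h2 : 2 * M.edgeSet.ncard = Fintype.card V := by
      rw [← matching_verts_card hM.1, hM.2.verts_eq_univ, Set.ncard_univ,
        Nat.card_eq_fintype_card]
    omega
  have hindep : _root_.indepNum G = S.card :=
    le_antisymm (csSup_le ⟨S.card, S, hSindG, rfl⟩ hub)
      (le_csSup ⟨S.card, hub⟩ ⟨S, hSindG, rfl⟩)
  have hmatch := two_mul_matchNum hM
  rw [KonigEgervary, hindep]
  omega
end
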